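/- arXiv:1608.03729 — 2 statements merged into one kernel-verified Lean document; each statement's English description precedes it below -/
import Mathlib

section
/- Halanay's inequality: Let h > 0 and let 0 < δ₁ < δ₀ be real constants. Let V : [-h, ∞) → [0, ∞) be a continuous function, differentiable on [0, ∞), satisfying V'(t) ≤ -2δ₀ V(t) + 2δ₁ sup_{θ ∈ [-h, 0]} V(t + θ) for all t ≥ 0. Then V(t) ≤ e^{-2δ t} · sup_{θ ∈ [-h, 0]} V(θ) for all t ≥ 0, where δ > 0 is the unique positive real number satisfying δ = δ₀ - δ₁ e^{2δh}. -/
open Set Filter Topology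

set_option maxHeartbeats 1000000

/-- Halanay's inequality: if `V : [-h, ∞) → [0, ∞)` is continuous, differentiable on
`[0, ∞)` with derivative `V'`, and satisfies
`V'(t) ≤ -2δ₀ V(t) + 2δ₁ sup_{θ ∈ [-h,0]} V(t+θ)` for `t ≥ 0`, then
`V(t) ≤ e^{-2δt} sup_{θ ∈ [-h,0]} V(θ)` for all `t ≥ 0`, where `δ > 0` is the unique
positive solution of `δ = δ₀ - δ₁ e^{2δh}`. -/
theorem halanay_inequality
    (h δ₀ δ₁ : ℝ) (hh : 0 < h) (hδ₁ : 0 < δ₁) (hδ : δ₁ < δ₀)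
    (V V' : ℝ → ℝ)
    (hV_nonneg : ∀ t, -h ≤ t → 0 ≤ V t)
    (hV_cont : ContinuousOn V (Set.Ici (-h)))
    (hV_deriv : ∀ t, 0 ≤ t → HasDerivWithinAt V (V' t) (Set.Ici 0) t)
    (hV_ineq : ∀ t, 0 ≤ t →
      V' t ≤ -2 * δ₀ * V t + 2 * δ₁ * sSup (V '' Set.Icc (t - h) t))
    (δ : ℝ) (hδ_pos : 0 < δ) (hδ_eq : δ = δ₀ - δ₁ * Real.exp (2 * δ * h)) :
    ∀ t, 0 ≤ t → V t ≤ Real.exp (-2 * δ * t) * sSup (V '' Set.Icc (-h) 0) := by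
  intro t ht
  set M := sSup (V '' Set.Icc (-h) 0) with hM
  have hIcc : ContinuousOn V (Set.Icc (-h) 0) :=
    hV_cont.mono (Set.Icc_subset_Ici_self)
  have hbdd : BddAbove (V '' Set.Icc (-h) 0) :=
    (isCompact_Icc.image_of_continuousOn hIcc).bddAbove
  have hMle : ∀ s ∈ Set.Icc (-h) 0, V s ≤ M := fun s hs =>
    le_csSup hbdd (Set.mem_image_of_mem _ hs)
  have hM0 : 0 ≤ M :=
    le_trans (hV_nonneg 0 (by linarith)) (hMle 0 ⟨by linarith, le_refl 0⟩)
  -- key claim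
  have key : ∀ ε ∈ Set.Ioo (0:ℝ) δ, ∀ s, 0 ≤ s →
      V s < (M + ε) * Real.exp (-2*(δ-ε)*s) := by
    intro ε hε
    set δ' := δ - ε with hδ'
    have hδ'pos : 0 < δ' := by simp only [hδ']; linarith [hε.2]
    have hδ'lt : δ' < δ := by simp only [hδ']; linarith [hε.1]
    by_contra hcon
    push_neg at hcon
    obtain ⟨t₀, ht₀, ht₀ge⟩ := hcon
    set f := fun s => V s - (M+ε) * Real.exp (-2*δ'*s) with hf
    have hfcont : ContinuousOn f (Set.Ici 0) := by
      apply ContinuousOn.sub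
      · exact hV_cont.mono (Set.Ici_subset_Ici.mpr (by linarith))
      · exact Continuous.continuousOn (by fun_prop)
    set A := Set.Ici (0:ℝ) ∩ f ⁻¹' Set.Ici 0 with hA
    have hclosed : IsClosed A :=
      hfcont.preimage_isClosed_of_isClosed isClosed_Ici isClosed_Ici
    have hAne : A.Nonempty := ⟨t₀, ht₀, by simp only [Set.mem_preimage, Set.mem_Ici, hf]; linarith⟩
    have hAbdd : BddBelow A := ⟨0, fun x hx => hx.1⟩
    set T := sInf A with hT
    have hTA : T ∈ A := hclosed.csInf_mem hAne hAbdd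
    have hT0 : 0 ≤ T := hTA.1
    have hfT : 0 ≤ f T := hTA.2
    have hf0 : f 0 < 0 := by
      have h1 : V 0 ≤ M := hMle 0 ⟨by linarith, le_refl 0⟩
      simp only [hf, mul_zero, Real.exp_zero, mul_one]
      linarith [hε.1]
    have hTpos : 0 < T := by
      rcases hT0.lt_or_eq with h' | h'
      · exact h'
      · exfalso
        have h2 : f T < 0 := by rw [← h']; exact hf0
        linarith
    have hlt : ∀ s ∈ Set.Ico 0 T, f s < 0 := by
      intro s hs
      by_contra hc
      push_neg at hc
      have : T ≤ s := csInf_le hAbdd ⟨hs.1, hc⟩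
      linarith [hs.2]
    have hne : (𝓝[Set.Ico 0 T] T).NeBot := by
      rw [← mem_closure_iff_nhdsWithin_neBot, closure_Ico (by linarith : (0:ℝ) ≠ T)]
      exact ⟨hT0, le_refl T⟩
    have hfle : f T ≤ 0 := by
      have htend : Tendsto f (𝓝[Set.Ico 0 T] T) (𝓝 (f T)) :=
        (hfcont T hT0).mono_left (nhdsWithin_mono _ (fun s hs => hs.1))
      exact le_of_tendsto htend
        (eventually_mem_nhdsWithin.mono (fun s hs => (hlt s hs).le))
    have hfTeq : f T = 0 := le_antisymm hfle hfT
    have hVT : V T = (M+ε) * Real.exp (-2*δ'*T) := by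
      have h2 := hfTeq; simp only [hf] at h2; linarith
    have hMεpos : 0 < M + ε := by linarith [hε.1]
    -- sup bound
    have hsup : sSup (V '' Set.Icc (T-h) T) ≤ (M+ε) * Real.exp (-2*δ'*(T-h)) := by
      apply csSup_le ((Set.nonempty_Icc.mpr (by linarith)).image _)
      rintro x ⟨s, hs, rfl⟩
      rcases le_or_gt s 0 with hs0 | hs0
      · have h1 : V s ≤ M := hMle s ⟨by linarith [hs.1], hs0⟩
        have h2 : (1:ℝ) ≤ Real.exp (-2*δ'*(T-h)) := by
          apply Real.one_le_exp
          nlinarith [hs.1]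
        nlinarith
      · have hVs : V s ≤ (M+ε) * Real.exp (-2*δ'*s) := by
          rcases lt_or_eq_of_le hs.2 with hsT | hsT
          · have h3 := hlt s ⟨hs0.le, hsT⟩
            simp only [hf] at h3; linarith
          · rw [hsT, ← hVT]
        have h2 : Real.exp (-2*δ'*s) ≤ Real.exp (-2*δ'*(T-h)) := by
          apply Real.exp_le_exp.mpr
          nlinarith [hs.1]
        nlinarith
    -- derivative of comparator
    have hexpderiv : HasDerivAt (fun s : ℝ => Real.exp (-2*δ'*s))
        (Real.exp (-2*δ'*T) * (-2*δ')) T := by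
      have h1 : HasDerivAt (fun s : ℝ => -2*δ'*s) (-2*δ') T := by
        simpa using (hasDerivAt_id T).const_mul (-2*δ')
      exact h1.exp
    have hfderiv : HasDerivWithinAt f
        (V' T + 2*δ'*((M+ε) * Real.exp (-2*δ'*T))) (Set.Ici 0) T := by
      have h2 := (hV_deriv T hT0).sub ((hexpderiv.const_mul (M+ε)).hasDerivWithinAt)
      refine h2.congr_deriv ?_
      ring
    have hcneg : V' T + 2*δ'*((M+ε) * Real.exp (-2*δ'*T)) < 0 := by
      have hineq := hV_ineq T hT0
      set E := Real.exp (-2*δ'*T) with hE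
      set Q := Real.exp (2*δ'*h) with hQ
      have hEpos : 0 < E := Real.exp_pos _
      have hexp : Real.exp (-2*δ'*(T-h)) = E * Q := by
        rw [hE, hQ, ← Real.exp_add]; ring_nf
      rw [hexp] at hsup
      have hkey : δ' < δ₀ - δ₁ * Q := by
        have h1 : Q < Real.exp (2*δ*h) := Real.exp_lt_exp.mpr (by nlinarith [hh, hδ'lt])
        have h2 : δ₁ * Q < δ₁ * Real.exp (2*δ*h) := (mul_lt_mul_iff_right₀ hδ₁).mpr h1
        linarith only [h2, hδ_eq, hδ'lt]
      have h3 : 2*δ₁ * sSup (V '' Set.Icc (T-h) T) ≤ 2*δ₁*((M+ε) * (E * Q)) := by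
        have h3' := mul_le_mul_of_nonneg_left hsup (by positivity : (0:ℝ) ≤ 2*δ₁)
        linarith only [h3']
      have h4 : V' T ≤ -2*δ₀*((M+ε)*E) + 2*δ₁*((M+ε)*(E*Q)) := by
        rw [hVT] at hineq
        linarith only [hineq, h3]
      have h5 : 0 < ((M+ε)*E) * (δ₀ - δ₁*Q - δ') :=
        mul_pos (mul_pos hMεpos hEpos) (by linarith only [hkey])
      linarith only [h4, h5]
    -- slope contradiction
    rw [hasDerivWithinAt_iff_tendsto_slope] at hfderiv
    have hsub : Set.Ico 0 T ⊆ Set.Ici 0 \ {T} := fun s hs =>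
      ⟨hs.1, by simp only [Set.mem_singleton_iff]; intro hc; rw [hc] at hs; exact absurd hs.2 (lt_irrefl T)⟩
    have htend2 : Tendsto (slope f T) (𝓝[Set.Ico 0 T] T) (𝓝 _) :=
      hfderiv.mono_left (nhdsWithin_mono _ hsub)
    have hge : 0 ≤ V' T + 2*δ'*((M+ε) * Real.exp (-2*δ'*T)) := by
      apply ge_of_tendsto htend2
      apply eventually_mem_nhdsWithin.mono
      intro s hs
      have h1 : f s < 0 := hlt s hs
      have h2 : s - T < 0 := by linarith [hs.2]
      rw [slope_def_field, hfTeq, sub_zero]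
      exact div_nonneg_of_nonpos h1.le h2.le
    linarith
  -- pass to the limit ε → 0⁺
  have htend : Tendsto (fun ε => (M+ε) * Real.exp (-2*(δ-ε)*t)) (𝓝[>] 0)
      (𝓝 (Real.exp (-2*δ*t) * M)) := by
    have hc : Continuous (fun ε : ℝ => (M+ε) * Real.exp (-2*(δ-ε)*t)) := by fun_prop
    have h0 : Tendsto (fun ε : ℝ => (M+ε) * Real.exp (-2*(δ-ε)*t)) (𝓝[>] (0:ℝ))
        (𝓝 ((M+0) * Real.exp (-2*(δ-0)*t))) :=
      (hc.tendsto 0).mono_left nhdsWithin_le_nhds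
    simpa [mul_comm] using h0
  apply ge_of_tendsto htend
  filter_upwards [Ioo_mem_nhdsGT_of_mem ⟨le_refl (0:ℝ), hδ_pos⟩] with ε hε
  exact (key ε hε t ht).le
end

section
/- Let a, c ∈ ℝ with a + c arbitrary. Define q : {(x, y) : 0 ≤ y ≤ x ≤ 1} → ℝ by the everywhere-convergent power series q(x, y) = -(a + c) x · Σ_{n=0}^{∞} ((a + c)(x² - y²))ⁿ / (2^{2n+1} · n! · (n+1)!). Then q satisfies: (i) ∂²q/∂x²(x, y) = ∂²q/∂y²(x, y) + (a + c) q(x, y) for all 0 ≤ y ≤ x ≤ 1; (ii) ∂q/∂y(x, 0) = 0 for all x ∈ [0, 1]; (iii) q(x, x) = -((a + c)/2) x for all x ∈ [0, 1]. -/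
open MeasureTheory

noncomputable def co (n : ℕ) : ℝ :=
  ((2:ℝ) ^ (2 * n + 1) * n.factorial * (n + 1).factorial)⁻¹

lemma co_pos (n : ℕ) : 0 < co n := by
  unfold co; positivity

lemma fact_ge_one (n : ℕ) : (1:ℝ) ≤ n.factorial := by
  exact_mod_cast Nat.one_le_iff_ne_zero.2 n.factorial_pos.ne'

lemma two_pow_ge_one (m : ℕ) : (1:ℝ) ≤ 2 ^ m := one_le_pow₀ (by norm_num)

lemma inv_bound_aux (m B P : ℝ) (hB : 0 < B) (hP : 0 < P) (h : m * B ≤ P) :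
    m * P⁻¹ ≤ B⁻¹ := by
  rw [← div_eq_mul_inv, ← one_div, div_le_div_iff₀ hP hB]
  linarith

lemma fact_succ_cast (n : ℕ) : ((n+1).factorial : ℝ) = ((n:ℝ)+1) * n.factorial := by
  rw [Nat.factorial_succ]; push_cast; ring

lemma co_bound0 (n : ℕ) : ((n:ℝ) + 1) * co n ≤ (n.factorial : ℝ)⁻¹ := by
  unfold co
  apply inv_bound_aux _ _ _ (by positivity) (by positivity)
  rw [fact_succ_cast]
  have hA := two_pow_ge_one (2*n+1)
  have hB := fact_ge_one n
  have hn : (0:ℝ) ≤ n := Nat.cast_nonneg n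
  have hC : (0:ℝ) ≤ ((n:ℝ)+1) * (n.factorial:ℝ) := by positivity
  have hD : (1:ℝ) ≤ (2:ℝ)^(2*n+1) * (n.factorial:ℝ) := by nlinarith
  nlinarith [hC, hD]

lemma co_bound1 (n : ℕ) :
    ((n:ℝ) + 1) * (((n:ℝ)+1) * co (n+1)) ≤ (n.factorial : ℝ)⁻¹ := by
  unfold co
  rw [← mul_assoc]
  apply inv_bound_aux _ _ _ (by positivity) (by positivity)
  have e1 : ((n+1).factorial:ℝ) = ((n:ℝ)+1) * n.factorial := fact_succ_cast n
  have e2 : ((n+1+1).factorial:ℝ) = ((n:ℝ)+2) * (((n:ℝ)+1) * n.factorial) := by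
    rw [fact_succ_cast, e1]; push_cast; ring
  rw [e1, e2]
  have hA := two_pow_ge_one (2*(n+1)+1)
  have hB := fact_ge_one n
  have hn : (0:ℝ) ≤ n := Nat.cast_nonneg n
  have hC : (0:ℝ) ≤ ((n:ℝ)+1) * (((n:ℝ)+1) * (n.factorial:ℝ)) := by positivity
  have hD : (1:ℝ) ≤ (2:ℝ)^(2*(n+1)+1) * (((n:ℝ)+2) * (n.factorial:ℝ)) := by nlinarith
  nlinarith [hC, hD]

lemma co_bound2 (n : ℕ) :
    ((n:ℝ) + 1) * (((n:ℝ)+1) * (((n:ℝ)+2) * co (n+2))) ≤ (n.factorial : ℝ)⁻¹ := by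
  unfold co
  rw [← mul_assoc, ← mul_assoc]
  apply inv_bound_aux _ _ _ (by positivity) (by positivity)
  have e1 : ((n+1).factorial:ℝ) = ((n:ℝ)+1) * n.factorial := fact_succ_cast n
  have e2 : ((n+2).factorial:ℝ) = ((n:ℝ)+2) * (((n:ℝ)+1) * n.factorial) := by
    rw [show n+2 = (n+1)+1 from rfl, fact_succ_cast, e1]; push_cast; ring
  have e3 : ((n+2+1).factorial:ℝ) = ((n:ℝ)+3) * (((n:ℝ)+2) * (((n:ℝ)+1) * n.factorial)) := by
    rw [fact_succ_cast, e2]; push_cast; ring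
  rw [e2, e3]
  have hA := two_pow_ge_one (2*(n+2)+1)
  have hB := fact_ge_one n
  have hn : (0:ℝ) ≤ n := Nat.cast_nonneg n
  have hC : (0:ℝ) ≤ ((n:ℝ)+1) * (((n:ℝ)+1) * (((n:ℝ)+2) * (n.factorial:ℝ))) := by positivity
  have hD : (1:ℝ) ≤ (2:ℝ)^(2*(n+2)+1) * (((n:ℝ)+3) * (((n:ℝ)+2) * (n.factorial:ℝ))) := by
    nlinarith
  nlinarith [hC, hD]

lemma summable_coef (d : ℕ → ℝ) (hd : ∀ n : ℕ, 0 ≤ d n)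
    (hb : ∀ n : ℕ, ((n:ℝ)+1) * d n ≤ (n.factorial : ℝ)⁻¹) (u : ℝ) :
    Summable (fun n : ℕ => d n * u ^ n) := by
  apply Summable.of_norm_bounded
    (Real.summable_pow_div_factorial |u|)
  intro n
  have h1 : d n ≤ (n.factorial : ℝ)⁻¹ := by
    have := hb n
    have h2 : d n ≤ ((n:ℝ)+1) * d n := by nlinarith [hd n, (Nat.cast_nonneg n : (0:ℝ) ≤ n)]
    linarith
  rw [norm_mul, norm_pow]
  calc ‖d n‖ * |u| ^ n ≤ (n.factorial : ℝ)⁻¹ * |u| ^ n := by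
        apply mul_le_mul_of_nonneg_right _ (by positivity)
        rwa [Real.norm_of_nonneg (hd n)]
    _ = |u| ^ n / n.factorial := by rw [div_eq_mul_inv]; ring

lemma hasDerivAt_psum (d : ℕ → ℝ) (hd : ∀ n : ℕ, 0 ≤ d n)
    (hb : ∀ n : ℕ, ((n:ℝ)+1) * d n ≤ (n.factorial : ℝ)⁻¹) (u : ℝ) :
    HasDerivAt (fun t : ℝ => ∑' n : ℕ, d n * t ^ n)
      (∑' n : ℕ, (((n:ℝ)+1) * d (n+1)) * u ^ n) u := by
  set R : ℝ := |u| + 1 with hR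
  have hR1 : (1:ℝ) ≤ R := by rw [hR]; have := abs_nonneg u; linarith
  have hR0 : (0:ℝ) < R := lt_of_lt_of_le one_pos hR1
  -- summable bound for derivatives
  have hbnd : Summable (fun n : ℕ => (((n:ℝ)+1) * d n) * R ^ n) := by
    apply Summable.of_nonneg_of_le
      (fun n => mul_nonneg (mul_nonneg (by positivity) (hd n)) (by positivity))
      (fun n => ?_) (Real.summable_pow_div_factorial R)
    calc (((n:ℝ)+1) * d n) * R ^ n ≤ (n.factorial : ℝ)⁻¹ * R ^ n :=
          mul_le_mul_of_nonneg_right (hb n) (by positivity)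
      _ = R ^ n / n.factorial := by rw [div_eq_mul_inv]; ring
  have hderbound : ∀ (n : ℕ) (t : ℝ), t ∈ Set.Ioo (-R) R →
      ‖d n * ((n:ℝ) * t ^ (n-1))‖ ≤ (((n:ℝ)+1) * d n) * R ^ n := by
    intro n t ht
    have htR : |t| ≤ R := le_of_lt (abs_lt.2 ⟨ht.1, ht.2⟩)
    rw [norm_mul, norm_mul, norm_pow, Real.norm_of_nonneg (hd n),
      Real.norm_natCast, Real.norm_eq_abs]
    have h1 : |t| ^ (n-1) ≤ R ^ (n-1) := pow_le_pow_left₀ (abs_nonneg t) htR _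
    have h2 : R ^ (n-1) ≤ R ^ n := pow_le_pow_right₀ hR1 (Nat.sub_le n 1)
    have h3 : (n:ℝ) ≤ (n:ℝ)+1 := by linarith
    have h4 : (0:ℝ) ≤ (n:ℝ) := Nat.cast_nonneg n
    have h5 : (0:ℝ) ≤ R ^ (n-1) := by positivity
    nlinarith [mul_nonneg (mul_nonneg (hd n) h4) (sub_nonneg.2 (h1.trans h2)),
      mul_nonneg (hd n) (pow_nonneg (le_of_lt hR0) n)]
  have humem : u ∈ Set.Ioo (-R) R := by
    constructor
    · have := neg_abs_le u; rw [hR]; linarith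
    · have := le_abs_self u; rw [hR]; linarith
  have h0mem : (0:ℝ) ∈ Set.Ioo (-R) R := by constructor <;> [linarith; linarith]
  have hg0 : Summable (fun n : ℕ => d n * (0:ℝ) ^ n) := by
    apply summable_of_ne_finset_zero (s := {0})
    intro n hn
    simp only [Finset.mem_singleton] at hn
    rw [zero_pow hn, mul_zero]
  have H := hasDerivAt_tsum_of_isPreconnected hbnd isOpen_Ioo
    (convex_Ioo (-R) R).isPreconnected
    (fun n t _ => (hasDerivAt_pow n t).const_mul (d n))
    hderbound h0mem hg0 humem
  refine H.congr_deriv ?_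
  have hsum' : Summable (fun n : ℕ => d n * ((n:ℝ) * u ^ (n-1))) :=
    Summable.of_norm_bounded hbnd (fun n => hderbound n u humem)
  rw [Summable.tsum_eq_zero_add hsum']
  simp only [Nat.cast_zero, zero_mul, mul_zero, zero_add, Nat.add_sub_cancel]
  apply tsum_congr
  intro n
  push_cast
  ring

noncomputable def dd1 (n : ℕ) : ℝ := ((n:ℝ)+1) * co (n+1)

noncomputable def fF (u : ℝ) : ℝ := ∑' n : ℕ, co n * u ^ n
noncomputable def fG (u : ℝ) : ℝ := ∑' n : ℕ, dd1 n * u ^ n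
noncomputable def fH (u : ℝ) : ℝ := ∑' n : ℕ, (((n:ℝ)+1) * dd1 (n+1)) * u ^ n

lemma dd1_nonneg (n : ℕ) : 0 ≤ dd1 n := by
  unfold dd1
  exact mul_nonneg (by positivity) (co_pos _).le

lemma dd1_bound (n : ℕ) : ((n:ℝ)+1) * dd1 n ≤ (n.factorial : ℝ)⁻¹ := by
  unfold dd1; exact co_bound1 n

lemma dd2_nonneg (n : ℕ) : 0 ≤ ((n:ℝ)+1) * dd1 (n+1) := by
  exact mul_nonneg (by positivity) (dd1_nonneg _)

lemma dd2_bound (n : ℕ) : ((n:ℝ)+1) * (((n:ℝ)+1) * dd1 (n+1)) ≤ (n.factorial : ℝ)⁻¹ := by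
  unfold dd1
  have h := co_bound2 n
  have e : ((n+1:ℕ):ℝ) + 1 = (n:ℝ) + 2 := by push_cast; ring
  rw [e, show n+1+1 = n+2 from rfl]
  exact h

lemma hasDerivAt_fF (u : ℝ) : HasDerivAt fF (fG u) u := by
  have h := hasDerivAt_psum co (fun n => (co_pos n).le) co_bound0 u
  exact h

lemma hasDerivAt_fG (u : ℝ) : HasDerivAt fG (fH u) u := by
  have h := hasDerivAt_psum dd1 dd1_nonneg dd1_bound u
  exact h

lemma summable_F (u : ℝ) : Summable (fun n : ℕ => co n * u ^ n) :=
  summable_coef co (fun n => (co_pos n).le) co_bound0 u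

lemma summable_G (u : ℝ) : Summable (fun n : ℕ => dd1 n * u ^ n) :=
  summable_coef dd1 dd1_nonneg dd1_bound u

lemma summable_H (u : ℝ) : Summable (fun n : ℕ => (((n:ℝ)+1) * dd1 (n+1)) * u ^ n) :=
  summable_coef _ dd2_nonneg dd2_bound u

lemma co_rec (n : ℕ) : co n = (4 * ((n:ℝ)+1) * ((n:ℝ)+2)) * co (n+1) := by
  unfold co
  have e1 : ((n+1).factorial:ℝ) = ((n:ℝ)+1) * n.factorial := fact_succ_cast n
  have e2 : ((n+1+1).factorial:ℝ) = ((n:ℝ)+2) * (((n:ℝ)+1) * n.factorial) := by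
    rw [fact_succ_cast, e1]; push_cast; ring
  rw [e1, e2]
  have hp : (2:ℝ) ^ (2*(n+1)+1) = 4 * 2 ^ (2*n+1) := by
    rw [show 2*(n+1)+1 = (2*n+1)+2 from by ring, pow_add]; ring
  rw [hp]
  have hB : (n.factorial:ℝ) ≠ 0 := by positivity
  have hA : ((2:ℝ)) ^ (2*n+1) ≠ 0 := by positivity
  have h1 : ((n:ℝ)+1) ≠ 0 := by positivity
  have h2 : ((n:ℝ)+2) ≠ 0 := by positivity
  field_simp

lemma ode (u : ℝ) : fF u = 8 * fG u + 4 * u * fH u := by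
  have s0 := summable_F u
  have s1 := summable_G u
  have s2 := summable_H u
  have key : ∀ n : ℕ, co n * u ^ n - 8 * (dd1 n * u ^ n)
      = (4 * (n:ℝ) * ((n:ℝ)+1) * co (n+1)) * u ^ n := by
    intro n
    rw [co_rec n]
    unfold dd1
    ring
  have h1 : fF u - 8 * fG u = ∑' n : ℕ, (4 * (n:ℝ) * ((n:ℝ)+1) * co (n+1)) * u ^ n := by
    unfold fF fG
    rw [← tsum_mul_left, ← Summable.tsum_sub s0 (s1.mul_left 8)]
    exact tsum_congr key
  have hs : Summable (fun n : ℕ => (4 * (n:ℝ) * ((n:ℝ)+1) * co (n+1)) * u ^ n) :=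
    (s0.sub (s1.mul_left 8)).congr key
  have h2 : ∑' n : ℕ, (4 * (n:ℝ) * ((n:ℝ)+1) * co (n+1)) * u ^ n = 4 * u * fH u := by
    rw [Summable.tsum_eq_zero_add hs]
    simp only [Nat.cast_zero]
    unfold fH
    rw [← tsum_mul_left]
    rw [show (4 * (0:ℝ) * ((0:ℝ)+1) * co (0+1)) * u ^ 0 = 0 by ring, zero_add]
    apply tsum_congr
    intro n
    unfold dd1
    push_cast
    ring
  linarith [h1, h2]

lemma fF_zero : fF 0 = 1/2 := by
  unfold fF
  rw [tsum_eq_single 0 (fun n hn => by rw [zero_pow hn, mul_zero])]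
  norm_num [co]


/-- The backstepping kernel
`q(x,y) = -(a+c)x Σₙ ((a+c)(x²-y²))ⁿ / (2^{2n+1} n! (n+1)!)`
(the Bessel-series form of `-(a+c)x I₁(√((a+c)(x²-y²)))/√((a+c)(x²-y²))`) satisfies
`q_{xx} = q_{yy} + (a+c)q` on the triangle `0 ≤ y ≤ x ≤ 1`, `q_y(x,0) = 0`, and
`q(x,x) = -((a+c)/2)x`. -/
theorem kernel_q_pde
    (a c : ℝ) (q : ℝ → ℝ → ℝ)
    (hq : q = fun x y => -(a + c) * x *
      ∑' n : ℕ, ((a + c) * (x ^ 2 - y ^ 2)) ^ n /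
        (2 ^ (2 * n + 1) * (n.factorial : ℝ) * ((n + 1).factorial : ℝ))) :
    ∃ qx qxx qy qyy : ℝ → ℝ → ℝ,
      (∀ x y, HasDerivAt (fun t => q t y) (qx x y) x) ∧
      (∀ x y, HasDerivAt (fun t => qx t y) (qxx x y) x) ∧
      (∀ x y, HasDerivAt (fun s => q x s) (qy x y) y) ∧
      (∀ x y, HasDerivAt (fun s => qy x s) (qyy x y) y) ∧
      (∀ x y, 0 ≤ y → y ≤ x → x ≤ 1 → qxx x y = qyy x y + (a + c) * q x y) ∧
      (∀ x, 0 ≤ x → x ≤ 1 → qy x 0 = 0) ∧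
      (∀ x, 0 ≤ x → x ≤ 1 → q x x = -((a + c) / 2) * x) := by
  set k : ℝ := a + c with hk
  have hq' : ∀ x y : ℝ, q x y = (-k * x) * fF (k * (x^2 - y^2)) := by
    intro x y
    simp only [hq]
    unfold fF
    have : (∑' n : ℕ, (k * (x ^ 2 - y ^ 2)) ^ n /
        (2 ^ (2 * n + 1) * (n.factorial : ℝ) * ((n + 1).factorial : ℝ)))
        = ∑' n : ℕ, co n * (k * (x^2 - y^2)) ^ n := by
      apply tsum_congr
      intro n
      rw [co, div_eq_mul_inv, mul_comm]
    rw [this]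
  -- derivative of inner argument in x
  have hsx : ∀ x y : ℝ, HasDerivAt (fun t : ℝ => k * (t^2 - y^2)) (k * (2*x)) x := by
    intro x y
    have h := ((hasDerivAt_pow 2 x).sub_const (y^2)).const_mul k
    refine h.congr_deriv ?_
    norm_num
  have hsy : ∀ x y : ℝ, HasDerivAt (fun s : ℝ => k * (x^2 - s^2)) (-(k * (2*y))) y := by
    intro x y
    have h := ((hasDerivAt_pow 2 y).const_sub (x^2)).const_mul k
    refine h.congr_deriv ?_
    norm_num
  refine ⟨fun x y => -k * fF (k*(x^2-y^2)) - 2*k^2*x^2 * fG (k*(x^2-y^2)),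
    fun x y => -6*k^2*x * fG (k*(x^2-y^2)) - 4*k^3*x^3 * fH (k*(x^2-y^2)),
    fun x y => 2*k^2*x*y * fG (k*(x^2-y^2)),
    fun x y => 2*k^2*x * fG (k*(x^2-y^2)) - 4*k^3*x*y^2 * fH (k*(x^2-y^2)),
    ?_, ?_, ?_, ?_, ?_, ?_, ?_⟩
  · -- qx
    intro x y
    simp only [hq']
    have hA : HasDerivAt (fun t : ℝ => -k * t) (-k) x := by
      simpa using (hasDerivAt_id x).const_mul (-k)
    have hB : HasDerivAt (fun t : ℝ => fF (k*(t^2-y^2)))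
        (fG (k*(x^2-y^2)) * (k * (2*x))) x :=
      (hasDerivAt_fF _).comp x (hsx x y)
    have := hA.mul hB
    refine this.congr_deriv ?_
    ring
  · -- qxx
    intro x y
    have h1 : HasDerivAt (fun t : ℝ => -k * fF (k*(t^2-y^2)))
        (-k * (fG (k*(x^2-y^2)) * (k * (2*x)))) x :=
      ((hasDerivAt_fF _).comp x (hsx x y)).const_mul (-k)
    have h2a : HasDerivAt (fun t : ℝ => 2*k^2*t^2) (2*k^2*(2*x)) x := by
      have := (hasDerivAt_pow 2 x).const_mul (2*k^2)
      refine this.congr_deriv ?_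
      norm_num
    have h2b : HasDerivAt (fun t : ℝ => fG (k*(t^2-y^2)))
        (fH (k*(x^2-y^2)) * (k * (2*x))) x :=
      (hasDerivAt_fG _).comp x (hsx x y)
    have h2 := h2a.mul h2b
    have := h1.sub h2
    refine this.congr_deriv ?_
    ring
  · -- qy
    intro x y
    simp only [hq']
    have hB : HasDerivAt (fun s : ℝ => fF (k*(x^2-s^2)))
        (fG (k*(x^2-y^2)) * (-(k * (2*y)))) y :=
      (hasDerivAt_fF _).comp y (hsy x y)
    have := hB.const_mul (-k * x)
    refine this.congr_deriv ?_
    ring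
  · -- qyy
    intro x y
    have h2a : HasDerivAt (fun s : ℝ => 2*k^2*x*s) (2*k^2*x) y := by
      simpa using (hasDerivAt_id y).const_mul (2*k^2*x)
    have h2b : HasDerivAt (fun s : ℝ => fG (k*(x^2-s^2)))
        (fH (k*(x^2-y^2)) * (-(k * (2*y)))) y :=
      (hasDerivAt_fG _).comp y (hsy x y)
    have := h2a.mul h2b
    refine this.congr_deriv ?_
    ring
  · -- PDE
    intro x y _ _ _
    rw [hq' x y, ode (k*(x^2-y^2))]
    ring
  · -- qy at 0
    intro x _ _
    ring
  · -- boundary q(x,x)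
    intro x _ _
    rw [hq' x x, show k*(x^2-x^2) = 0 by ring, fF_zero]
    rw [hk]
    ring
end
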